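/- Every co-minimal subgroup H of a Hausdorff topological group (G, γ) is inj-key: for any two coarser Hausdorff group topologies γ₁, γ₂ ⊆ γ on G, if γ₁|_H = γ₂|_H then γ₁ = γ₂. -/

import Mathlib

open Topology

/-- Subspace topology induced on a subgroup `H` by a topology `t` on `G`. -/
def subTop {G : Type*} [Group G] (t : TopologicalSpace G) (H : Subgroup G) :
    TopologicalSpace H :=
  t.induced ((↑) : H → G)

/-- Quotient topology on the coset space `G ⧸ H` induced by a topology `t` on `G`. -/
def quotTop {G : Type*} [Group G] (t : TopologicalSpace G) (H : Subgroup G) :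
    TopologicalSpace (G ⧸ H) :=
  t.coinduced (QuotientGroup.mk : G → G ⧸ H)

/-- `H` is a key subgroup of `(G, γ)`: every coarser Hausdorff group topology `γ₁`
(`γ ≤ γ₁` in Mathlib's order means `γ₁` is coarser than `γ`) inducing the original
subspace topology on `H` coincides with `γ`. -/
def IsKey {G : Type*} [Group G] (γ : TopologicalSpace G) (H : Subgroup G) : Prop :=
  ∀ γ₁ : TopologicalSpace G, γ ≤ γ₁ → @IsTopologicalGroup G γ₁ _ → @T2Space G γ₁ →
    subTop γ₁ H = subTop γ H → γ₁ = γ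

/-- `H` is a co-key subgroup of `(G, γ)`: every coarser Hausdorff group topology `γ₁`
inducing the original quotient topology on `G ⧸ H` coincides with `γ`. -/
def IsCoKey {G : Type*} [Group G] (γ : TopologicalSpace G) (H : Subgroup G) : Prop :=
  ∀ γ₁ : TopologicalSpace G, γ ≤ γ₁ → @IsTopologicalGroup G γ₁ _ → @T2Space G γ₁ →
    quotTop γ₁ H = quotTop γ H → γ₁ = γ

/-- `H` is relatively minimal in `(G, γ)`: every coarser Hausdorff group topology on `G`
induces the original subspace topology on `H`. -/
def IsRelMin {G : Type*} [Group G] (γ : TopologicalSpace G) (H : Subgroup G) : Prop :=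
  ∀ γ₁ : TopologicalSpace G, γ ≤ γ₁ → @IsTopologicalGroup G γ₁ _ → @T2Space G γ₁ →
    subTop γ₁ H = subTop γ H

/-- `H` is co-minimal in `(G, γ)`: every coarser Hausdorff group topology on `G`
induces the original quotient topology on the coset space `G ⧸ H`. -/
def IsCoMin {G : Type*} [Group G] (γ : TopologicalSpace G) (H : Subgroup G) : Prop :=
  ∀ γ₁ : TopologicalSpace G, γ ≤ γ₁ → @IsTopologicalGroup G γ₁ _ → @T2Space G γ₁ →
    quotTop γ₁ H = quotTop γ H

/-- `(X, γ)` is a minimal topological group: no strictly coarser Hausdorff group topology. -/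
def IsMinimalGroup {X : Type*} [Group X] (γ : TopologicalSpace X) : Prop :=
  ∀ γ₁ : TopologicalSpace X, γ ≤ γ₁ → @IsTopologicalGroup X γ₁ _ → @T2Space X γ₁ → γ₁ = γ


/-- Image of an open set under the quotient map is open in the quotient topology. -/
lemma quot_image_open {G : Type*} [Group G] [TopologicalSpace G] [IsTopologicalGroup G]
    (H : Subgroup G) {S : Set G} (hS : IsOpen S) :
    IsOpen[quotTop ‹TopologicalSpace G› H] ((QuotientGroup.mk : G → G ⧸ H) '' S) := by
  show IsOpen ((QuotientGroup.mk : G → G ⧸ H) ⁻¹' (QuotientGroup.mk '' S))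
  rw [QuotientGroup.preimage_image_mk]
  exact isOpen_iUnion fun x => hS.preimage (continuous_mul_right (x : G))

/-- Merson's lemma: if a coarser group topology σ agrees with τ on a subgroup `H`
and on the coset space `G ⧸ H`, then σ = τ. -/
lemma merson {G : Type*} [Group G] (σ τ : TopologicalSpace G)
    (hle : τ ≤ σ) (hσg : @IsTopologicalGroup G σ _) (hτg : @IsTopologicalGroup G τ _)
    (H : Subgroup G)
    (hsub : subTop τ H = subTop σ H)
    (hquot : quotTop τ H = quotTop σ H) : τ = σ := by
  letI := σ
  haveI := hσg
  refine IsTopologicalGroup.ext hτg hσg (le_antisymm (nhds_mono hle) ?_)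
  intro U hU
  -- τ-side: open V with 1 ∈ V, V*V ⊆ U
  obtain ⟨V, Vopen, V1, hVU⟩ :=
    @exists_open_nhds_one_mul_subset G τ _ hτg.toContinuousMul U hU
  -- subspace equality gives σ-open O with O ∩ H = V ∩ H
  have h1 : IsOpen[subTop σ H] ((Subtype.val : H → G) ⁻¹' V) := by
    rw [← hsub]; exact ⟨V, Vopen, rfl⟩
  obtain ⟨O, Oopen, hOV⟩ := h1
  have hiff : ∀ h : H, (h : G) ∈ O ↔ (h : G) ∈ V := fun h => Set.ext_iff.mp hOV h
  have O1 : (1 : G) ∈ O := (hiff ⟨1, H.one_mem⟩).mpr V1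
  -- σ-side: symmetric open W with W*W ⊆ O
  obtain ⟨W, Wopen, W1, hWO⟩ := exists_open_nhds_one_mul_subset (Oopen.mem_nhds O1)
  set W' : Set G := W ∩ W⁻¹ with hW'
  have W'open : IsOpen W' := Wopen.inter Wopen.inv
  have W'1 : (1 : G) ∈ W' := ⟨W1, by simpa using W1⟩
  set S : Set G := V ∩ W' with hS
  have Sopen : IsOpen[τ] S := @IsOpen.inter G τ V W' Vopen (W'open.mono hle)
  have Timg : IsOpen[quotTop τ H] ((QuotientGroup.mk : G → G ⧸ H) '' S) :=
    @quot_image_open G _ τ hτg H S Sopen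
  have Timg' : IsOpen ((QuotientGroup.mk : G → G ⧸ H) ⁻¹' (QuotientGroup.mk '' S)) := by
    rw [hquot] at Timg
    exact Timg
  set N : Set G := W' ∩ (QuotientGroup.mk : G → G ⧸ H) ⁻¹' (QuotientGroup.mk '' S) with hN
  have Nopen : IsOpen N := W'open.inter Timg'
  have N1 : (1 : G) ∈ N := ⟨W'1, ⟨1, ⟨V1, W'1⟩, rfl⟩⟩
  refine Filter.mem_of_superset (Nopen.mem_nhds N1) ?_
  rintro x ⟨hxW', v, ⟨hvV, hvW'⟩, hvx⟩
  have hmem : v⁻¹ * x ∈ H := by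
    rwa [QuotientGroup.eq] at hvx
  have hO : v⁻¹ * x ∈ O := hWO (Set.mul_mem_mul hvW'.2 hxW'.1)
  have hV : v⁻¹ * x ∈ V := (hiff ⟨v⁻¹ * x, hmem⟩).mp hO
  have : x = v * (v⁻¹ * x) := by group
  rw [this]
  exact hVU (Set.mul_mem_mul hvV hV)

/-- Every co-minimal subgroup is inj-key: two coarser Hausdorff group topologies agreeing
on `H` coincide. -/
theorem injKey_of_isCoMin {G : Type*} [Group G] (γ : TopologicalSpace G)
    (hγ : @IsTopologicalGroup G γ _) (hT2 : @T2Space G γ)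
    (H : Subgroup G) (hco : IsCoMin γ H) :
    ∀ γ₁ γ₂ : TopologicalSpace G, γ ≤ γ₁ → γ ≤ γ₂ →
      @IsTopologicalGroup G γ₁ _ → @IsTopologicalGroup G γ₂ _ →
      @T2Space G γ₁ → @T2Space G γ₂ →
      subTop γ₁ H = subTop γ₂ H → γ₁ = γ₂ := by
  intro γ₁ γ₂ h1 h2 tg1 tg2 ht1 ht2 hsub
  set η : TopologicalSpace G := γ₁ ⊓ γ₂ with hη
  have hγη : γ ≤ η := le_inf h1 h2
  have ηg : @IsTopologicalGroup G η _ := topologicalGroup_inf tg1 tg2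
  have ηt2 : @T2Space G η := t2Space_antitone (inf_le_left : η ≤ γ₁) ht1
  have hq1 : quotTop γ₁ H = quotTop γ H := hco γ₁ h1 tg1 ht1
  have hq2 : quotTop γ₂ H = quotTop γ H := hco γ₂ h2 tg2 ht2
  have hqη : quotTop η H = quotTop γ H := hco η hγη ηg ηt2
  have hsubη : subTop η H = subTop γ₁ H := by
    show (γ₁ ⊓ γ₂).induced _ = _
    rw [induced_inf]
    show subTop γ₁ H ⊓ subTop γ₂ H = subTop γ₁ H
    rw [hsub, inf_idem]
  have hsubη₂ : subTop η H = subTop γ₂ H := hsubη.trans hsub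
  have e1 : η = γ₁ := merson γ₁ η inf_le_left tg1 ηg H hsubη (hqη.trans hq1.symm)
  have e2 : η = γ₂ := merson γ₂ η inf_le_right tg2 ηg H hsubη₂ (hqη.trans hq2.symm)
  rw [← e1, ← e2]
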